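/- The Lobachevsky function 𝓛(x) = -∫₀ˣ log|2 sin t| dt satisfies 𝓛(0) = 0, is odd (𝓛(-x) = -𝓛(x)), and is π-periodic: 𝓛(x + π) = 𝓛(x) for all real x. -/

import Mathlib

open Real intervalIntegral

/-- The Lobachevsky function `𝓛(x) = -∫₀ˣ log|2 sin t| dt`. -/
noncomputable def lob (x : ℝ) : ℝ := -∫ t in (0 : ℝ)..x, Real.log |2 * Real.sin t|

open Real intervalIntegral MeasureTheory Set

noncomputable def lf (t : ℝ) : ℝ := Real.log |2 * Real.sin t|

lemma lf_neg (t : ℝ) : lf (-t) = lf t := by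
  simp [lf, Real.sin_neg, abs_mul, mul_comm]

lemma lf_pi_sub (t : ℝ) : lf (π - t) = lf t := by
  simp [lf, Real.sin_pi_sub]

lemma lf_periodic : Function.Periodic lf π := by
  intro t
  simp [lf, Real.sin_add_pi, abs_mul]

lemma lf_meas : Measurable lf :=
  Real.measurable_log.comp (continuous_abs.comp (continuous_const.mul Real.continuous_sin)).measurable

lemma aux_integrable : IntervalIntegrable (fun t => 2 * Real.log 2 - Real.log t) volume 0 (π/2) := by
  have h2 : (0:ℝ) ≤ π/2 := by positivity
  apply intervalIntegrable_deriv_of_nonneg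
    (g := fun t : ℝ => t * (2 * Real.log 2 + 1) - t * Real.log t)
  · exact ((continuous_id.mul continuous_const).sub Real.continuous_mul_log).continuousOn
  · intro x hx
    rw [min_eq_left h2, max_eq_right h2] at hx
    have h1 : HasDerivAt (fun t : ℝ => t * (2 * Real.log 2 + 1)) (2 * Real.log 2 + 1) x := by
      simpa using (hasDerivAt_id x).mul_const (2 * Real.log 2 + 1)
    have hld := Real.hasDerivAt_mul_log hx.1.ne'
    exact (h1.sub hld).congr_deriv (by ring)
  · intro x hx
    rw [min_eq_left h2, max_eq_right h2] at hx
    have hx4 : x ≤ 4 := by nlinarith [Real.pi_le_four, hx.2]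
    have : Real.log x ≤ Real.log 4 := Real.log_le_log hx.1 hx4
    have h4 : Real.log 4 = 2 * Real.log 2 := by
      rw [show (4:ℝ) = 2^2 by norm_num, Real.log_pow]; push_cast; ring
    linarith [this, h4.symm.le]

lemma lf_int_base : IntervalIntegrable lf volume 0 (π/2) := by
  have h2 : (0:ℝ) ≤ π/2 := by positivity
  apply aux_integrable.mono_fun lf_meas.aestronglyMeasurable
  rw [Filter.EventuallyLE, ae_restrict_iff' measurableSet_uIoc]
  refine Filter.Eventually.of_forall fun t ht => ?_
  rw [uIoc_of_le h2] at ht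
  have ht0 : 0 < t := ht.1
  have htp : t ≤ π/2 := ht.2
  have hsin : 2 / π * t ≤ Real.sin t := Real.mul_le_sin ht0.le htp
  have hpi : (2:ℝ) / π ≥ 1/2 := by
    rw [ge_iff_le, div_le_div_iff₀ (by norm_num) Real.pi_pos]
    nlinarith [Real.pi_le_four]
  have hts : t / 2 ≤ Real.sin t := by nlinarith
  have hsinpos : 0 < Real.sin t := lt_of_lt_of_le (by positivity) hts
  have habs : |2 * Real.sin t| = 2 * Real.sin t := abs_of_pos (by positivity)
  have hlogt2 : Real.log t ≤ Real.log 2 := Real.log_le_log ht0 (by nlinarith [Real.pi_le_four])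
  have hub : Real.log |2 * Real.sin t| ≤ Real.log 2 := by
    rw [habs]
    exact Real.log_le_log (by positivity) (by nlinarith [Real.sin_le_one t])
  have hlb : Real.log t ≤ Real.log |2 * Real.sin t| := by
    rw [habs]
    exact Real.log_le_log ht0 (by linarith)
  have h2l : 0 ≤ Real.log 2 := Real.log_nonneg (by norm_num)
  have hrhs : 0 ≤ 2 * Real.log 2 - Real.log t := by linarith
  simp only [Real.norm_eq_abs, lf]
  rw [abs_of_nonneg hrhs, abs_le]
  constructor <;> linarith

lemma lf_int_halfpi_pi : IntervalIntegrable lf volume (π/2) π := by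
  have h := lf_int_base.comp_sub_left π
  have he : (fun x => lf (π - x)) = lf := funext lf_pi_sub
  rw [he] at h
  have : π - π/2 = π/2 := by ring
  rw [this, sub_zero] at h
  exact h.symm

lemma lf_int_pi : IntervalIntegrable lf volume 0 π :=
  lf_int_base.trans lf_int_halfpi_pi

lemma lf_int_shift (n : ℤ) : IntervalIntegrable lf volume (n * π) (n * π + π) := by
  have h := lf_int_pi.comp_add_right (-(n * π))
  have he : (fun x => lf (x + -(n * π))) = lf := by
    funext x
    rw [← sub_eq_add_neg]
    have := (lf_periodic.zsmul n).sub_eq x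
    simpa [zsmul_eq_mul] using this
  rw [he] at h
  convert h using 1 <;> ring

lemma lf_int_sym (n : ℕ) : IntervalIntegrable lf volume (-(n * π)) (n * π) := by
  induction n with
  | zero => simp [IntervalIntegrable]
  | succ n ih =>
    have h1 : IntervalIntegrable lf volume (-((n+1 : ℕ) * π)) (-(n * π)) := by
      have := lf_int_shift (-(n+1 : ℤ))
      convert this using 1 <;> push_cast <;> ring
    have h2 : IntervalIntegrable lf volume ((n : ℝ) * π) ((n+1 : ℕ) * π) := by
      have := lf_int_shift (n : ℤ)
      convert this using 1 <;> push_cast <;> ring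
    exact (h1.trans ih).trans h2

lemma lf_int (a b : ℝ) : IntervalIntegrable lf volume a b := by
  obtain ⟨n, hn⟩ := exists_nat_ge (max |a| |b| / π)
  have hpi := Real.pi_pos
  have hn' : max |a| |b| ≤ n * π := by
    rw [div_le_iff₀ hpi] at hn; linarith
  apply (lf_int_sym n).mono_set
  rw [uIcc_of_le (by nlinarith [abs_nonneg a] : -((n:ℝ) * π) ≤ n * π)]
  have ha := abs_le.mp ((le_max_left |a| |b|).trans hn')
  have hb := abs_le.mp ((le_max_right |a| |b|).trans hn')
  have : uIcc a b ⊆ Icc (-((n:ℝ) * π)) ((n:ℝ) * π) := by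
    apply uIcc_subset_Icc <;> constructor <;> [exact ha.1; exact ha.2; exact hb.1; exact hb.2]
  exact this

lemma lf_reflect : ∫ t in (0:ℝ)..π/2, lf t = ∫ t in (π/2:ℝ)..π, lf t := by
  have h1 : ∫ t in (0:ℝ)..π/2, lf t = ∫ t in (0:ℝ)..π/2, lf (π - t) := by
    simp [lf_pi_sub]
  rw [h1, integral_comp_sub_left lf π]
  norm_num
  ring_nf

lemma lf_J2 : ∫ t in (0:ℝ)..π, lf t = 2 * ∫ t in (0:ℝ)..π/2, lf t := by
  rw [← integral_add_adjacent_intervals (lf_int 0 (π/2)) (lf_int (π/2) π), ← lf_reflect]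
  ring

lemma lf_cos_reflect : ∫ t in (0:ℝ)..π/2, lf (π/2 - t) = ∫ t in (0:ℝ)..π/2, lf t := by
  rw [integral_comp_sub_left lf (π/2)]
  norm_num

lemma lf_double_ae : ∀ᵐ t ∂(volume : Measure ℝ), t ∈ Set.uIoc (0:ℝ) (π/2) →
    lf (2 * t) = lf t + lf (π/2 - t) := by
  have hE : (volume : Measure ℝ) ({t | Real.sin t = 0} ∪ {t | Real.cos t = 0}) = 0 := by
    apply measure_union_null <;> apply Set.Countable.measure_zero
    · have : {t : ℝ | Real.sin t = 0} ⊆ Set.range (fun n : ℤ => (n:ℝ) * π) := by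
        intro t ht
        obtain ⟨n, hn⟩ := Real.sin_eq_zero_iff.mp ht
        exact ⟨n, hn⟩
      exact Set.Countable.mono this (Set.countable_range _)
    · have : {t : ℝ | Real.cos t = 0} ⊆ Set.range (fun n : ℤ => ((2*n+1):ℝ) * π / 2) := by
        intro t ht
        obtain ⟨n, hn⟩ := Real.cos_eq_zero_iff.mp ht
        exact ⟨n, by push_cast; linarith⟩
      exact Set.Countable.mono this (Set.countable_range _)
  filter_upwards [measure_eq_zero_iff_ae_notMem.mp hE] with t ht _
  simp only [Set.mem_union, Set.mem_setOf_eq, not_or] at ht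
  have hs : Real.sin t ≠ 0 := ht.1
  have hc : Real.cos t ≠ 0 := ht.2
  have h2 : lf (2 * t) = Real.log (|2 * Real.sin t| * |2 * Real.cos t|) := by
    rw [lf, Real.sin_two_mul, ← abs_mul]
    ring_nf
  rw [h2, Real.log_mul (by simpa using hs) (by simpa using hc), lf, lf,
    Real.sin_pi_div_two_sub]

lemma lf_pi_zero : ∫ t in (0:ℝ)..π, lf t = 0 := by
  have hcomp : IntervalIntegrable (fun t => lf (π/2 - t)) volume 0 (π/2) := by
    have h := (lf_int 0 (π/2)).comp_sub_left (π/2)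
    norm_num at h
    exact h.symm
  have hL : ∫ t in (0:ℝ)..π/2, lf (2 * t) = (∫ t in (0:ℝ)..π, lf t) / 2 := by
    rw [integral_comp_mul_left lf (by norm_num : (2:ℝ) ≠ 0)]
    norm_num
    ring
  have hR : ∫ t in (0:ℝ)..π/2, lf (2 * t) = ∫ t in (0:ℝ)..π, lf t := by
    rw [integral_congr_ae lf_double_ae,
      integral_add (lf_int 0 (π/2)) hcomp, lf_cos_reflect, lf_J2]
    ring
  rw [hR] at hL
  linarith

lemma lob_eq (x : ℝ) : lob x = -∫ t in (0:ℝ)..x, lf t := rfl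

/-- The Lobachevsky function vanishes at `0`, is odd, and is `π`-periodic. -/
theorem lob_zero_odd_periodic :
    lob 0 = 0 ∧ (∀ x : ℝ, lob (-x) = -lob x) ∧ (∀ x : ℝ, lob (x + π) = lob x) := by
  refine ⟨by simp [lob], fun x => ?_, fun x => ?_⟩
  · rw [lob_eq, lob_eq, neg_neg]
    have h1 : ∫ t in (0:ℝ)..(-x), lf t = ∫ t in (0:ℝ)..(-x), lf (-t) := by
      simp [lf_neg]
    rw [h1, integral_comp_neg lf, neg_zero, integral_symm, neg_neg, neg_neg]
  · rw [lob_eq, lob_eq, neg_inj,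
      ← integral_add_adjacent_intervals (lf_int 0 x) (lf_int x (x + π)),
      lf_periodic.intervalIntegral_add_eq x 0, zero_add, lf_pi_zero, add_zero]
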